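/- Suppose μ, ν ∈ L^∞(Δ) are infinitesimally equivalent with ‖ν‖_∞ ≤ ‖μ‖_∞, and suppose the Infinitesimal Delta Inequality holds: ∫∫_Δ |μ−ν|² |φ| ≤ C‖μ‖_∞(‖μ‖_∞‖φ‖ − Re ∫∫_Δ μφ) for all φ ∈ A(Δ). If there is a sequence φₙ ∈ A(Δ) with ‖μ‖_∞‖φₙ‖ − Re ∫∫_Δ μφₙ → 0 and liminf |φₙ(z)| > 0 for almost every z in a measurable set E ⊂ Δ, then μ = ν almost everywhere on E. -/

import Mathlib

open Set MeasureTheory Metric Filter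

/-- under the Infinitesimal Delta Inequality, if `μ, ν ∈ L^∞(Δ)` are
infinitesimally equivalent with `‖ν‖_∞ ≤ ‖μ‖_∞` and there is a sequence `φₙ ∈ A(Δ)`
with `‖μ‖_∞‖φₙ‖ - Re ∫∫ μφₙ → 0` and `liminf |φₙ(z)| > 0` a.e. on a measurable set
`E ⊂ Δ`, then `μ = ν` a.e. on `E`. -/
theorem delta_inequality_forces_agreement
    (μ ν : ℂ → ℂ) (k : ℝ) (C : ℝ) (hC : 0 < C)
    (hμm : Measurable μ) (hνm : Measurable ν)
    -- `‖μ‖_∞ = k` and `‖ν‖_∞ ≤ ‖μ‖_∞`: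
    (hμk : ∀ᵐ z ∂(volume.restrict (ball (0 : ℂ) 1)), ‖μ z‖ ≤ k)
    (hνk : ∀ᵐ z ∂(volume.restrict (ball (0 : ℂ) 1)), ‖ν z‖ ≤ k)
    -- infinitesimal equivalence:
    (hequiv : ∀ φ' : ℂ → ℂ, DifferentiableOn ℂ φ' (ball (0 : ℂ) 1) →
      IntegrableOn φ' (ball (0 : ℂ) 1) →
      ∫ z in ball (0 : ℂ) 1, μ z * φ' z = ∫ z in ball (0 : ℂ) 1, ν z * φ' z)
    -- the Infinitesimal Delta Inequality:
    (hdeltaIneq : ∀ φ' : ℂ → ℂ, DifferentiableOn ℂ φ' (ball (0 : ℂ) 1) →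
      IntegrableOn φ' (ball (0 : ℂ) 1) →
      (∫ z in ball (0 : ℂ) 1, ‖μ z - ν z‖ ^ 2 * ‖φ' z‖) ≤
        C * k * (k * (∫ z in ball (0 : ℂ) 1, ‖φ' z‖) -
          (∫ z in ball (0 : ℂ) 1, μ z * φ' z).re))
    (φ : ℕ → ℂ → ℂ)
    (hφholo : ∀ n, DifferentiableOn ℂ (φ n) (ball (0 : ℂ) 1))
    (hφint : ∀ n, IntegrableOn (φ n) (ball (0 : ℂ) 1))
    (hdelta : Tendsto (fun n =>
        k * (∫ z in ball (0 : ℂ) 1, ‖φ n z‖) -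
          (∫ z in ball (0 : ℂ) 1, μ z * φ n z).re) atTop (nhds 0))
    (E : Set ℂ) (hE : MeasurableSet E) (hEΔ : E ⊆ ball (0 : ℂ) 1)
    (hliminf : ∀ᵐ z ∂(volume.restrict E),
        0 < Filter.liminf (fun n => ‖φ n z‖) atTop) :
    ∀ᵐ z ∂(volume.restrict E), μ z = ν z := by
  set B := ball (0 : ℂ) 1 with hB
  have hBmeas : MeasurableSet B := measurableSet_ball
  have hrle : volume.restrict E ≤ volume.restrict B :=
    Measure.restrict_mono hEΔ le_rfl
  -- the sequence of functions in the Fatou argument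
  set F : ℕ → ℂ → ENNReal :=
    fun n z => ENNReal.ofReal (‖μ z - ν z‖ ^ 2 * ‖φ n z‖) with hF
  -- ae-measurability of `F n` w.r.t. `volume.restrict E`
  have hφaem : ∀ n, AEMeasurable (φ n) (volume.restrict E) := fun n =>
    (((hφholo n).continuousOn).aemeasurable hBmeas).mono_measure hrle
  have hFaem : ∀ n, AEMeasurable (F n) (volume.restrict E) := by
    intro n
    exact ((((hμm.sub hνm).norm.pow_const 2).aemeasurable.mul
      (hφaem n).norm)).ennreal_ofReal
  -- integrability of the integrand on `B`
  have hμνbd : ∀ᵐ z ∂(volume.restrict B), ‖‖μ z - ν z‖ ^ 2‖ ≤ (2 * k) ^ 2 := by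
    filter_upwards [hμk, hνk] with z h1 h2
    have h3 : ‖μ z - ν z‖ ≤ 2 * k := by
      calc ‖μ z - ν z‖ ≤ ‖μ z‖ + ‖ν z‖ := norm_sub_le _ _
        _ ≤ 2 * k := by linarith
    rw [Real.norm_eq_abs, abs_of_nonneg (by positivity)]
    exact pow_le_pow_left₀ (norm_nonneg _) h3 2
  have hGint : ∀ n, Integrable (fun z => ‖μ z - ν z‖ ^ 2 * ‖φ n z‖)
      (volume.restrict B) := by
    intro n
    exact (hφint n).norm.bdd_mul
      (((hμm.sub hνm).norm.pow_const 2).aestronglyMeasurable) hμνbd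
  -- the key bound on the lintegral over `E`
  have hbound : ∀ n, (∫⁻ z in E, F n z) ≤
      ENNReal.ofReal (C * k * (k * (∫ z in B, ‖φ n z‖) -
        (∫ z in B, μ z * φ n z).re)) := by
    intro n
    calc (∫⁻ z in E, F n z) ≤ ∫⁻ z in B, F n z :=
          lintegral_mono' hrle le_rfl
      _ = ENNReal.ofReal (∫ z in B, ‖μ z - ν z‖ ^ 2 * ‖φ n z‖) := by
          rw [ofReal_integral_eq_lintegral_ofReal (hGint n)
            (Filter.Eventually.of_forall fun z => by positivity)]
      _ ≤ _ := ENNReal.ofReal_le_ofReal (hdeltaIneq (φ n) (hφholo n) (hφint n))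
  -- the right-hand side tends to `0`
  have hrhs : Tendsto (fun n => ENNReal.ofReal (C * k * (k * (∫ z in B, ‖φ n z‖) -
      (∫ z in B, μ z * φ n z).re))) atTop (nhds 0) := by
    have h1 := hdelta.const_mul (C * k)
    rw [mul_zero] at h1
    simpa using ENNReal.tendsto_ofReal h1
  -- liminf of the lintegrals is `0`
  have hliminf0 : Filter.liminf (fun n => ∫⁻ z in E, F n z) atTop = 0 := by
    refine le_antisymm ?_ (zero_le)
    calc Filter.liminf (fun n => ∫⁻ z in E, F n z) atTop
        ≤ Filter.liminf (fun n => ENNReal.ofReal (C * k * (k * (∫ z in B, ‖φ n z‖) -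
            (∫ z in B, μ z * φ n z).re))) atTop :=
          Filter.liminf_le_liminf (Filter.Eventually.of_forall hbound)
      _ = 0 := hrhs.liminf_eq
  -- Fatou
  have hFatou : (∫⁻ z in E, Filter.liminf (fun n => F n z) atTop) = 0 := by
    refine le_antisymm ?_ (zero_le)
    calc (∫⁻ z in E, Filter.liminf (fun n => F n z) atTop)
        ≤ Filter.liminf (fun n => ∫⁻ z in E, F n z) atTop := lintegral_liminf_le' hFaem
      _ = 0 := hliminf0
  -- ae-measurability of the liminf
  have hlimaem : AEMeasurable (fun z => Filter.liminf (fun n => F n z) atTop)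
      (volume.restrict E) := by
    refine ⟨fun z => Filter.liminf (fun n => (hFaem n).mk _ z) atTop,
      Measurable.liminf fun n => (hFaem n).measurable_mk, ?_⟩
    have : ∀ᵐ z ∂(volume.restrict E), ∀ n, F n z = (hFaem n).mk _ z :=
      MeasureTheory.ae_all_iff.2 fun n => (hFaem n).ae_eq_mk
    filter_upwards [this] with z hz
    simp only [funext hz]
  -- the liminf vanishes a.e. on `E`
  have hzero : ∀ᵐ z ∂(volume.restrict E),
      Filter.liminf (fun n => F n z) atTop = 0 := by
    have h2 := (MeasureTheory.lintegral_eq_zero_iff' hlimaem).1 hFatou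
    filter_upwards [h2] with z hz
    simpa using hz
  -- conclude
  filter_upwards [hzero, hliminf] with z hz hl
  by_contra hne
  have hpos : 0 < ‖μ z - ν z‖ ^ 2 :=
    pow_pos (norm_pos_iff.2 (sub_ne_zero.2 hne)) 2
  set L := Filter.liminf (fun n => ‖φ n z‖) atTop with hL
  have hbdd : Filter.IsBoundedUnder (· ≥ ·) atTop (fun n => ‖φ n z‖) :=
    Filter.isBoundedUnder_of ⟨0, fun n => norm_nonneg _⟩
  have hev : ∀ᶠ n in atTop, L / 2 < ‖φ n z‖ :=
    Filter.eventually_lt_of_lt_liminf (by linarith) hbdd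
  have hge : ENNReal.ofReal (‖μ z - ν z‖ ^ 2 * (L / 2)) ≤
      Filter.liminf (fun n => F n z) atTop := by
    refine Filter.le_liminf_of_le (by isBoundedDefault) ?_
    filter_upwards [hev] with n hn
    exact ENNReal.ofReal_le_ofReal
      (mul_le_mul_of_nonneg_left hn.le (by positivity))
  rw [hz] at hge
  have : ‖μ z - ν z‖ ^ 2 * (L / 2) ≤ 0 := by
    simpa only [ENNReal.ofReal_eq_zero] using (le_antisymm hge (zero_le))
  nlinarith
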